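/- Let ρ* = min over λ in the simplex Δ(Z) of max_{z ∈ Z} ‖z‖²_{H(λ)^{-1}} / (z^T θ*)², where H(λ) = ∑_z λ_z w_z z z^T is positive definite for all λ in the relative interior and w_z > 0. Partition Z into sets S_1, ..., S_L with S_ℓ = {z : |z^T θ*| ≤ 2^{1-ℓ}·2} ∖ S_{ℓ+1} style layers, such that every z ∈ S_ℓ satisfies |z^T θ*| ≤ 2^{2-ℓ}. Then ρ* ≥ (1/(16L)) ∑_{ℓ=1}^L 2^{2ℓ} · min_λ max_{z ∈ S_ℓ} ‖z‖²_{H(λ)^{-1}}. -/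

import Mathlib

open Matrix

set_option maxHeartbeats 1000000 in
lemma psd_sum_vecMulVec {d m : ℕ} (c : Fin m → ℝ) (hc : ∀ i, 0 ≤ c i)
    (z : Fin m → (Fin d → ℝ)) :
    (∑ i, (c i) • vecMulVec (z i) (z i)).PosSemidef := by
  refine Finset.sum_induction _ _ (fun A B hA hB => hA.add hB) Matrix.PosSemidef.zero
    (fun k _ => Matrix.PosSemidef.of_dotProduct_mulVec_nonneg ?_ ?_)
  · ext a b
    simp only [Matrix.conjTranspose_apply, Matrix.smul_apply, Matrix.vecMulVec_apply,
      smul_eq_mul, star_trivial]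
    ring
  · intro x
    have hmv : (vecMulVec (z k) (z k)) *ᵥ x = (z k ⬝ᵥ x) • (z k) := by
      ext a
      simp only [Matrix.mulVec, Matrix.vecMulVec_apply, dotProduct, Pi.smul_apply,
        smul_eq_mul, Finset.sum_mul, Finset.mul_sum]
      exact Finset.sum_congr rfl fun j _ => by ring
    have hcalc : dotProduct (star x) ((c k • vecMulVec (z k) (z k)) *ᵥ x)
        = c k * (z k ⬝ᵥ x) ^ 2 := by
      rw [smul_mulVec, hmv, star_trivial, dotProduct_smul, dotProduct_smul,
        dotProduct_comm x (z k)]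
      simp [sq, mul_assoc]
    rw [hcalc]
    exact mul_nonneg (hc k) (sq_nonneg _)

/-- Layered lower bound on the instance-dependent complexity ρ*: with arms partitioned
into layers S_1, ..., S_L where every z ∈ S_ℓ has margin |zᵀθ*| ≤ 2^{2-ℓ},
ρ* ≥ (1/(16L)) ∑_ℓ 2^{2ℓ} · min_λ max_{z ∈ S_ℓ} ‖z‖²_{H(λ)⁻¹}. -/
theorem stmt_18 {d m L : ℕ} (hm : 0 < m) (hL : 0 < L)
    (z : Fin m → (Fin d → ℝ)) (w : Fin m → ℝ) (hw : ∀ i, 0 < w i)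
    (θstar : Fin d → ℝ) (hzθ : ∀ i, z i ⬝ᵥ θstar ≠ 0)
    (H : (Fin m → ℝ) → Matrix (Fin d) (Fin d) ℝ)
    (hH : ∀ lam, H lam = ∑ i, (lam i * w i) • vecMulVec (z i) (z i))
    (hpos : ∀ lam : Fin m → ℝ, (∀ i, 0 < lam i) → (∑ i, lam i = 1) → (H lam).PosDef)
    (hne : (Finset.univ : Finset (Fin m)).Nonempty)
    (ρstar : ℝ)
    (hρ : ρstar = ⨅ lam : stdSimplex ℝ (Fin m),
      Finset.univ.sup' hne (fun i =>
        (z i ⬝ᵥ ((H (lam : Fin m → ℝ))⁻¹ *ᵥ z i)) / (z i ⬝ᵥ θstar) ^ 2))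
    (S : Fin L → Finset (Fin m))
    (hpart : ∀ i : Fin m, ∃! ℓ : Fin L, i ∈ S ℓ)
    (hSne : ∀ ℓ : Fin L, (S ℓ).Nonempty)
    (hmargin : ∀ ℓ : Fin L, ∀ i ∈ S ℓ,
      |z i ⬝ᵥ θstar| ≤ (2 : ℝ) ^ ((1 : ℤ) - ((ℓ : ℕ) : ℤ))) :
    ρstar ≥ (1 / (16 * (L : ℝ))) * ∑ ℓ : Fin L,
      (2 : ℝ) ^ (2 * ((ℓ : ℕ) + 1)) *
        ⨅ lam : stdSimplex ℝ (Fin m),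
          (S ℓ).sup' (hSne ℓ) (fun i => z i ⬝ᵥ ((H (lam : Fin m → ℝ))⁻¹ *ᵥ z i)) := by
  -- nonnegativity of the quadratic forms
  have hq : ∀ lam : stdSimplex ℝ (Fin m), ∀ i,
      0 ≤ z i ⬝ᵥ ((H (lam : Fin m → ℝ))⁻¹ *ᵥ z i) := by
    intro lam i
    have hpsd : (H (lam : Fin m → ℝ)).PosSemidef := by
      rw [hH]
      exact psd_sum_vecMulVec _ (fun k => mul_nonneg (lam.2.1 k) (hw k).le) z
    have := hpsd.inv.dotProduct_mulVec_nonneg (z i)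
    simpa using this
  have hΔne : Nonempty (stdSimplex ℝ (Fin m)) := by
    refine ⟨⟨fun _ => (m : ℝ)⁻¹, fun i => by positivity, ?_⟩⟩
    simp [Finset.sum_const]
    field_simp
  rw [hρ, ge_iff_le]
  apply le_ciInf
  intro lam
  set F := Finset.univ.sup' hne (fun i =>
    (z i ⬝ᵥ ((H (lam : Fin m → ℝ))⁻¹ *ᵥ z i)) / (z i ⬝ᵥ θstar) ^ 2) with hF
  have hF0 : 0 ≤ F := by
    obtain ⟨i, hi⟩ := hne
    refine le_trans (div_nonneg (hq lam i) (sq_nonneg (z i ⬝ᵥ θstar)))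
      (Finset.le_sup' (fun i => (z i ⬝ᵥ ((H (lam : Fin m → ℝ))⁻¹ *ᵥ z i)) / (z i ⬝ᵥ θstar) ^ 2) hi)
  have key : ∀ ℓ : Fin L,
      (2 : ℝ) ^ (2 * ((ℓ : ℕ) + 1)) *
        (⨅ lam' : stdSimplex ℝ (Fin m),
          (S ℓ).sup' (hSne ℓ) (fun i => z i ⬝ᵥ ((H (lam' : Fin m → ℝ))⁻¹ *ᵥ z i)))
      ≤ 16 * F := by
    intro ℓ
    have hbdd : BddBelow (Set.range fun lam' : stdSimplex ℝ (Fin m) =>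
        (S ℓ).sup' (hSne ℓ) (fun i => z i ⬝ᵥ ((H (lam' : Fin m → ℝ))⁻¹ *ᵥ z i))) := by
      refine ⟨0, ?_⟩
      rintro x ⟨lam', rfl⟩
      obtain ⟨i, hi⟩ := hSne ℓ
      exact le_trans (hq lam' i)
        (Finset.le_sup' (fun i => z i ⬝ᵥ ((H (lam' : Fin m → ℝ))⁻¹ *ᵥ z i)) hi)
    have h1 : (⨅ lam' : stdSimplex ℝ (Fin m),
        (S ℓ).sup' (hSne ℓ) (fun i => z i ⬝ᵥ ((H (lam' : Fin m → ℝ))⁻¹ *ᵥ z i)))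
        ≤ (S ℓ).sup' (hSne ℓ) (fun i => z i ⬝ᵥ ((H (lam : Fin m → ℝ))⁻¹ *ᵥ z i)) :=
      ciInf_le hbdd lam
    have h2 : (S ℓ).sup' (hSne ℓ) (fun i => z i ⬝ᵥ ((H (lam : Fin m → ℝ))⁻¹ *ᵥ z i))
        ≤ (2 : ℝ) ^ ((2 : ℤ) - 2 * ((ℓ : ℕ) : ℤ)) * F := by
      apply Finset.sup'_le
      intro i hi
      have hri : (z i ⬝ᵥ ((H (lam : Fin m → ℝ))⁻¹ *ᵥ z i)) / (z i ⬝ᵥ θstar) ^ 2 ≤ F :=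
        Finset.le_sup' (fun i => (z i ⬝ᵥ ((H (lam : Fin m → ℝ))⁻¹ *ᵥ z i)) / (z i ⬝ᵥ θstar) ^ 2) (Finset.mem_univ i)
      have hz2 : (0 : ℝ) < (z i ⬝ᵥ θstar) ^ 2 := sq_pos_of_ne_zero (hzθ i)
      have hsq : (z i ⬝ᵥ θstar) ^ 2 ≤ (2 : ℝ) ^ ((2 : ℤ) - 2 * ((ℓ : ℕ) : ℤ)) := by
        have hm' := hmargin ℓ i hi
        calc (z i ⬝ᵥ θstar) ^ 2 = |z i ⬝ᵥ θstar| ^ 2 := (sq_abs _).symm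
          _ ≤ ((2 : ℝ) ^ ((1 : ℤ) - ((ℓ : ℕ) : ℤ))) ^ 2 :=
              pow_le_pow_left₀ (abs_nonneg _) hm' 2
          _ = (2 : ℝ) ^ ((2 : ℤ) - 2 * ((ℓ : ℕ) : ℤ)) := by
              rw [← zpow_natCast ((2:ℝ) ^ ((1 : ℤ) - ((ℓ : ℕ) : ℤ))) 2, ← _root_.zpow_mul]
              ring_nf
      calc z i ⬝ᵥ ((H (lam : Fin m → ℝ))⁻¹ *ᵥ z i)
          = ((z i ⬝ᵥ ((H (lam : Fin m → ℝ))⁻¹ *ᵥ z i)) / (z i ⬝ᵥ θstar) ^ 2)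
            * (z i ⬝ᵥ θstar) ^ 2 := by rw [div_mul_cancel₀ _ hz2.ne']
        _ ≤ F * (2 : ℝ) ^ ((2 : ℤ) - 2 * ((ℓ : ℕ) : ℤ)) := by
            apply mul_le_mul hri hsq hz2.le hF0
        _ = (2 : ℝ) ^ ((2 : ℤ) - 2 * ((ℓ : ℕ) : ℤ)) * F := mul_comm _ _
    have hpow : (0 : ℝ) ≤ (2 : ℝ) ^ (2 * ((ℓ : ℕ) + 1)) := by positivity
    calc (2 : ℝ) ^ (2 * ((ℓ : ℕ) + 1)) *
          (⨅ lam' : stdSimplex ℝ (Fin m),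
            (S ℓ).sup' (hSne ℓ) (fun i => z i ⬝ᵥ ((H (lam' : Fin m → ℝ))⁻¹ *ᵥ z i)))
        ≤ (2 : ℝ) ^ (2 * ((ℓ : ℕ) + 1)) *
            ((2 : ℝ) ^ ((2 : ℤ) - 2 * ((ℓ : ℕ) : ℤ)) * F) :=
          mul_le_mul_of_nonneg_left (h1.trans h2) hpow
      _ = 16 * F := by
          rw [← mul_assoc]
          congr 1
          rw [← zpow_natCast (2:ℝ) (2 * ((ℓ : ℕ) + 1)), ← zpow_add₀ (two_ne_zero)]
          norm_num
          rw [show ((2 : ℤ) * (((ℓ:ℕ):ℤ) + 1) + (2 - 2 * ((ℓ:ℕ):ℤ))) = 4 by ring]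
          norm_num
  have hsum : ∑ ℓ : Fin L,
      (2 : ℝ) ^ (2 * ((ℓ : ℕ) + 1)) *
        (⨅ lam' : stdSimplex ℝ (Fin m),
          (S ℓ).sup' (hSne ℓ) (fun i => z i ⬝ᵥ ((H (lam' : Fin m → ℝ))⁻¹ *ᵥ z i)))
      ≤ (L : ℝ) * (16 * F) := by
    calc _ ≤ ∑ _ℓ : Fin L, 16 * F := Finset.sum_le_sum fun ℓ _ => key ℓ
      _ = (L : ℝ) * (16 * F) := by simp [Finset.sum_const, mul_comm]
  have hLpos : (0 : ℝ) < 16 * (L : ℝ) := by positivity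
  calc (1 / (16 * (L : ℝ))) * ∑ ℓ : Fin L,
        (2 : ℝ) ^ (2 * ((ℓ : ℕ) + 1)) *
          (⨅ lam' : stdSimplex ℝ (Fin m),
            (S ℓ).sup' (hSne ℓ) (fun i => z i ⬝ᵥ ((H (lam' : Fin m → ℝ))⁻¹ *ᵥ z i)))
      ≤ (1 / (16 * (L : ℝ))) * ((L : ℝ) * (16 * F)) :=
        mul_le_mul_of_nonneg_left hsum (by positivity)
    _ = F := by field_simp
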